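/- Fix 2 ≤ m ≤ n−1 and let H(ψ), H(χ) ∈ Z_{n,m}. Then H(ψ) and H(χ) are isomorphic or anti-isomorphic if and only if there exist σ ∈ S_{{m+1,…,n}}, τ ∈ S_m with 1^τ = 1, and π ∈ S_2 such that ψ(x₁, x₂) = χ(x_{1^π}^σ, x_{2^π}^σ)^τ for all x₁, x₂ ∈ {m+1,…,n}. -/

import Mathlib

lemma fwd16 (n m : ℕ) (hm2 : 2 ≤ m) (hn : m < n)
    (ψ χ : {x : Fin n // m ≤ x.val} → {x : Fin n // m ≤ x.val} → Fin m)
    (hψ : ∀ b : Fin m, b.val ≠ 0 → ∃ x y, ψ x y = b)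
    (mulψ mulχ : Fin n → Fin n → Fin n)
    (hψ1 : ∀ x y (hx : m ≤ x.val) (hy : m ≤ y.val),
      mulψ x y = Fin.castLE hn.le (ψ ⟨x, hx⟩ ⟨y, hy⟩))
    (hψ0 : ∀ x y, ¬(m ≤ x.val ∧ m ≤ y.val) → mulψ x y = ⟨0, by omega⟩)
    (hχ1 : ∀ x y (hx : m ≤ x.val) (hy : m ≤ y.val),
      mulχ x y = Fin.castLE hn.le (χ ⟨x, hx⟩ ⟨y, hy⟩))
    (hχ0 : ∀ x y, ¬(m ≤ x.val ∧ m ≤ y.val) → mulχ x y = ⟨0, by omega⟩)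
    (π : Equiv.Perm (Fin n)) (hπ : ∀ x y, π (mulψ x y) = mulχ (π x) (π y)) :
    ∃ (σ : Equiv.Perm {x : Fin n // m ≤ x.val}) (τ : Equiv.Perm (Fin m)),
      (τ ⟨0, Nat.lt_of_lt_of_le two_pos hm2⟩).val = 0 ∧ ∀ x y, τ (χ (σ x) (σ y)) = ψ x y := by
  have hm0 : 0 < m := by omega
  have hn0 : 0 < n := by omega
  have prodχ_lt : ∀ x y, (mulχ x y).val < m := by
    intro x y
    by_cases h : m ≤ x.val ∧ m ≤ y.val
    · rw [hχ1 x y h.1 h.2]; exact (χ ⟨x, h.1⟩ ⟨y, h.2⟩).isLt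
    · rw [hχ0 x y h]; exact hm0
  have hz : π ⟨0, hn0⟩ = ⟨0, hn0⟩ := by
    have h1 : mulψ ⟨0, hn0⟩ ⟨0, hn0⟩ = ⟨0, hn0⟩ := hψ0 _ _ (by simp; omega)
    have h2 := hπ ⟨0, hn0⟩ ⟨0, hn0⟩
    rw [h1] at h2
    have h3 : (π ⟨0, hn0⟩).val < m := by rw [h2]; exact prodχ_lt _ _
    rw [h2, hχ0 _ _ (by intro h; omega)]
  have hsmall : ∀ c : Fin n, c.val < m → (π c).val < m := by
    intro c hc
    by_cases h0 : c.val = 0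
    · have : c = ⟨0, hn0⟩ := Fin.ext h0
      rw [this, hz]; omega
    · obtain ⟨x, y, hxy⟩ := hψ ⟨c.val, hc⟩ h0
      have : mulψ x.val y.val = c := by
        rw [hψ1 _ _ x.2 y.2]
        simp only [Subtype.coe_eta, hxy]
        exact Fin.ext rfl
      rw [← this, hπ]; exact prodχ_lt _ _
  have hbig : ∀ c : Fin n, m ≤ c.val → m ≤ (π c).val := by
    intro c hc
    by_contra hlt
    push_neg at hlt
    set S : Finset (Fin n) := Finset.univ.filter (fun c => c.val < m) with hS
    have himg : S.image π = S := by
      apply Finset.eq_of_subset_of_card_le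
      · intro a ha
        simp only [hS, Finset.mem_image, Finset.mem_filter, Finset.mem_univ, true_and] at ha ⊢
        obtain ⟨b, hb, rfl⟩ := ha
        exact hsmall b hb
      · rw [Finset.card_image_of_injective _ π.injective]
    have hc2 : π c ∈ S := by
      simp only [hS, Finset.mem_filter, Finset.mem_univ, true_and]; exact hlt
    rw [← himg, Finset.mem_image] at hc2
    obtain ⟨b, hb, hbc⟩ := hc2
    have : b = c := π.injective hbc
    subst this
    simp only [hS, Finset.mem_filter] at hb
    omega
  have hiff : ∀ c : Fin n, m ≤ c.val ↔ m ≤ (π c).val := by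
    intro c
    constructor
    · exact hbig c
    · intro h
      by_contra hlt
      push_neg at hlt
      have := hsmall c hlt
      omega
  have hiff' : ∀ c : Fin n, c.val < m ↔ (π c).val < m := by
    intro c; have := hiff c; omega
  -- the permutation of the big part
  set σ : Equiv.Perm {x : Fin n // m ≤ x.val} := π.subtypePerm (fun c => (hiff c).symm) with hσdef
  have hσ : ∀ x : {x : Fin n // m ≤ x.val}, ((σ x : {x : Fin n // m ≤ x.val}) : Fin n) = π x.val :=
    fun x => rfl
  -- the permutation of the small part
  set σ' : Equiv.Perm {x : Fin n // x.val < m} := π.subtypePerm (fun c => (hiff' c).symm) with hσ'def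
  set e : {x : Fin n // x.val < m} ≃ Fin m :=
    ⟨fun x => ⟨x.1.val, x.2⟩, fun b => ⟨⟨b.val, lt_trans b.isLt hn⟩, b.isLt⟩,
      fun x => by apply Subtype.ext; apply Fin.ext; rfl,
      fun b => by apply Fin.ext; rfl⟩ with hedef
  set τ0 : Equiv.Perm (Fin m) := (e.symm.trans (σ'.trans e)) with hτ0def
  have hτ0 : ∀ b : Fin m, (τ0 b).val = (π ⟨b.val, lt_trans b.isLt hn⟩).val := fun b => rfl
  have hτ0z : τ0 ⟨0, hm0⟩ = ⟨0, hm0⟩ := by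
    apply Fin.ext
    rw [hτ0, hz]
  refine ⟨σ, τ0.symm, ?_, ?_⟩
  · rw [show (⟨0, by omega⟩ : Fin m) = τ0 ⟨0, hm0⟩ from hτ0z.symm, Equiv.symm_apply_apply]
  · intro x y
    have key : τ0 (ψ x y) = χ (σ x) (σ y) := by
      apply Fin.ext
      rw [hτ0]
      have h1 : (⟨(ψ x y).val, lt_trans (ψ x y).isLt hn⟩ : Fin n) = mulψ x.val y.val := by
        rw [hψ1 _ _ x.2 y.2]
        simp only [Subtype.coe_eta]
        exact Fin.ext rfl
      rw [h1, hπ, hχ1 _ _ (hbig _ x.2) (hbig _ y.2)]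
      have h2 : (⟨π x.val, hbig _ x.2⟩ : {x : Fin n // m ≤ x.val}) = σ x :=
        Subtype.ext (hσ x).symm
      have h3 : (⟨π y.val, hbig _ y.2⟩ : {x : Fin n // m ≤ x.val}) = σ y :=
        Subtype.ext (hσ y).symm
      rw [h2, h3]
      rfl
    rw [← key, Equiv.symm_apply_apply]


lemma bwd16 (n m : ℕ) (hm2 : 2 ≤ m) (hn : m < n)
    (ψ χ : {x : Fin n // m ≤ x.val} → {x : Fin n // m ≤ x.val} → Fin m)
    (mulψ mulχ : Fin n → Fin n → Fin n)
    (hψ1 : ∀ x y (hx : m ≤ x.val) (hy : m ≤ y.val),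
      mulψ x y = Fin.castLE hn.le (ψ ⟨x, hx⟩ ⟨y, hy⟩))
    (hψ0 : ∀ x y, ¬(m ≤ x.val ∧ m ≤ y.val) → mulψ x y = ⟨0, by omega⟩)
    (hχ1 : ∀ x y (hx : m ≤ x.val) (hy : m ≤ y.val),
      mulχ x y = Fin.castLE hn.le (χ ⟨x, hx⟩ ⟨y, hy⟩))
    (hχ0 : ∀ x y, ¬(m ≤ x.val ∧ m ≤ y.val) → mulχ x y = ⟨0, by omega⟩)
    (σ : Equiv.Perm {x : Fin n // m ≤ x.val}) (τ : Equiv.Perm (Fin m))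
    (hτz : (τ ⟨0, Nat.lt_of_lt_of_le two_pos hm2⟩).val = 0)
    (hrel : ∀ x y, τ (χ (σ x) (σ y)) = ψ x y) :
    ∃ π : Equiv.Perm (Fin n), ∀ x y, π (mulψ x y) = mulχ (π x) (π y) := by
  have hm0 : 0 < m := by omega
  have hn0 : 0 < n := by omega
  have hτz' : τ.symm ⟨0, hm0⟩ = ⟨0, hm0⟩ := by
    exact (Equiv.symm_apply_eq τ).mpr (Fin.ext hτz).symm
  set f : Fin n → Fin n := fun c =>
    if h : m ≤ c.val then ((σ ⟨c, h⟩ : {x : Fin n // m ≤ x.val}) : Fin n)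
    else ⟨(τ.symm ⟨c.val, by omega⟩).val, by
      exact lt_trans (τ.symm ⟨c.val, by omega⟩).isLt hn⟩ with hfdef
  set g : Fin n → Fin n := fun c =>
    if h : m ≤ c.val then ((σ.symm ⟨c, h⟩ : {x : Fin n // m ≤ x.val}) : Fin n)
    else ⟨(τ ⟨c.val, by omega⟩).val, by
      exact lt_trans (τ ⟨c.val, by omega⟩).isLt hn⟩ with hgdef
  have hgf : ∀ c, g (f c) = c := by
    intro c
    by_cases h : m ≤ c.val
    · have h1 : f c = ((σ ⟨c, h⟩ : {x : Fin n // m ≤ x.val}) : Fin n) := dif_pos h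
      rw [h1]
      have h2 : m ≤ ((σ ⟨c, h⟩ : {x : Fin n // m ≤ x.val}) : Fin n).val := (σ ⟨c, h⟩).2
      have h3 : g _ = ((σ.symm ⟨_, h2⟩ : {x : Fin n // m ≤ x.val}) : Fin n) := dif_pos h2
      rw [h3]
      have h4 : (⟨((σ ⟨c, h⟩ : {x : Fin n // m ≤ x.val}) : Fin n), h2⟩ :
          {x : Fin n // m ≤ x.val}) = σ ⟨c, h⟩ := Subtype.ext rfl
      rw [h4, Equiv.symm_apply_apply]
    · push_neg at h
      have h1 : f c = ⟨(τ.symm ⟨c.val, by omega⟩).val,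
          lt_trans (τ.symm ⟨c.val, by omega⟩).isLt hn⟩ := dif_neg (by omega)
      rw [h1]
      have h2 : ¬ m ≤ (τ.symm (⟨c.val, by omega⟩ : Fin m)).val := by
        have := (τ.symm (⟨c.val, by omega⟩ : Fin m)).isLt; omega
      rw [hgdef]
      simp only
      rw [dif_neg h2]
      apply Fin.ext
      simp only
      have h3 : (⟨(τ.symm (⟨c.val, by omega⟩ : Fin m)).val, by omega⟩ : Fin m)
          = τ.symm ⟨c.val, by omega⟩ := Fin.ext rfl
      rw [h3, Equiv.apply_symm_apply]
  have hfg : ∀ c, f (g c) = c := by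
    intro c
    by_cases h : m ≤ c.val
    · have h1 : g c = ((σ.symm ⟨c, h⟩ : {x : Fin n // m ≤ x.val}) : Fin n) := dif_pos h
      rw [h1]
      have h2 : m ≤ ((σ.symm ⟨c, h⟩ : {x : Fin n // m ≤ x.val}) : Fin n).val := (σ.symm ⟨c, h⟩).2
      have h3 : f _ = ((σ ⟨_, h2⟩ : {x : Fin n // m ≤ x.val}) : Fin n) := dif_pos h2
      rw [h3]
      have h4 : (⟨((σ.symm ⟨c, h⟩ : {x : Fin n // m ≤ x.val}) : Fin n), h2⟩ :
          {x : Fin n // m ≤ x.val}) = σ.symm ⟨c, h⟩ := Subtype.ext rfl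
      rw [h4, Equiv.apply_symm_apply]
    · push_neg at h
      have h1 : g c = ⟨(τ ⟨c.val, by omega⟩).val,
          lt_trans (τ ⟨c.val, by omega⟩).isLt hn⟩ := dif_neg (by omega)
      rw [h1]
      have h2 : ¬ m ≤ (τ (⟨c.val, by omega⟩ : Fin m)).val := by
        have := (τ (⟨c.val, by omega⟩ : Fin m)).isLt; omega
      rw [hfdef]
      simp only
      rw [dif_neg h2]
      apply Fin.ext
      simp only
      have h3 : (⟨(τ (⟨c.val, by omega⟩ : Fin m)).val, by omega⟩ : Fin m)
          = τ ⟨c.val, by omega⟩ := Fin.ext rfl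
      rw [h3, Equiv.symm_apply_apply]
  refine ⟨⟨f, g, hgf, hfg⟩, ?_⟩
  intro x y
  show f (mulψ x y) = mulχ (f x) (f y)
  by_cases h : m ≤ x.val ∧ m ≤ y.val
  · obtain ⟨hx, hy⟩ := h
    rw [hψ1 x y hx hy]
    have hfx : f x = ((σ ⟨x, hx⟩ : {x : Fin n // m ≤ x.val}) : Fin n) := dif_pos hx
    have hfy : f y = ((σ ⟨y, hy⟩ : {x : Fin n // m ≤ x.val}) : Fin n) := dif_pos hy
    rw [hfx, hfy, hχ1 _ _ (σ ⟨x, hx⟩).2 (σ ⟨y, hy⟩).2]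
    have hlt : (Fin.castLE hn.le (ψ ⟨x, hx⟩ ⟨y, hy⟩)).val < m := (ψ ⟨x, hx⟩ ⟨y, hy⟩).isLt
    rw [hfdef]
    simp only
    rw [dif_neg (by omega)]
    apply Fin.ext
    simp only [Fin.coe_castLE]
    have h3 : (⟨(ψ ⟨x, hx⟩ ⟨y, hy⟩).val, by omega⟩ : Fin m)
        = ψ ⟨x, hx⟩ ⟨y, hy⟩ := Fin.ext rfl
    rw [h3, ← hrel ⟨x, hx⟩ ⟨y, hy⟩, Equiv.symm_apply_apply]
  · rw [hψ0 x y h]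
    have hz : f ⟨0, hn0⟩ = ⟨0, hn0⟩ := by
      rw [hfdef]
      simp only
      rw [dif_neg (by simp; omega)]
      apply Fin.ext
      simpa using congrArg Fin.val hτz'
    rw [hz]
    have hsmall : ∀ c : Fin n, c.val < m → (f c).val < m := by
      intro c hc
      have h1 : f c = ⟨(τ.symm ⟨c.val, by omega⟩).val,
          lt_trans (τ.symm ⟨c.val, by omega⟩).isLt hn⟩ := dif_neg (by omega)
      rw [h1]
      exact (τ.symm ⟨c.val, by omega⟩).isLt
    rw [hχ0]
    intro h2
    apply h
    constructor
    · by_contra hx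
      push_neg at hx
      have := hsmall x hx; omega
    · by_contra hy
      push_neg at hy
      have := hsmall y hy; omega



/-- For H(ψ), H(χ) ∈ Z_{n,m}: the semigroups are isomorphic or anti-isomorphic iff there
are σ ∈ S_A (A = {m+1,…,n}), τ ∈ S_m fixing the zero, and a choice π ∈ S_2 such that
ψ(x₁,x₂) = χ(x_{1^π}^σ, x_{2^π}^σ)^τ for all x₁, x₂ ∈ A. -/
theorem stmt16 (n m : ℕ) (hm2 : 2 ≤ m) (hmn : m ≤ n - 1)
    (ψ χ : {x : Fin n // m ≤ x.val} → {x : Fin n // m ≤ x.val} → Fin m)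
    (hψ : ∀ b : Fin m, b.val ≠ 0 → ∃ x y, ψ x y = b)
    (hχ : ∀ b : Fin m, b.val ≠ 0 → ∃ x y, χ x y = b)
    (mulψ mulχ : Fin n → Fin n → Fin n)
    (hmulψ : ∀ x y, mulψ x y =
      if h : m ≤ x.val ∧ m ≤ y.val then
        Fin.castLE (by omega) (ψ ⟨x, h.1⟩ ⟨y, h.2⟩) else ⟨0, by omega⟩)
    (hmulχ : ∀ x y, mulχ x y =
      if h : m ≤ x.val ∧ m ≤ y.val then
        Fin.castLE (by omega) (χ ⟨x, h.1⟩ ⟨y, h.2⟩) else ⟨0, by omega⟩) :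
    (∃ π : Equiv.Perm (Fin n),
        (∀ x y, π (mulψ x y) = mulχ (π x) (π y)) ∨
        (∀ x y, π (mulψ x y) = mulχ (π y) (π x))) ↔
    (∃ (σ : Equiv.Perm {x : Fin n // m ≤ x.val}) (τ : Equiv.Perm (Fin m)),
      (τ ⟨0, by omega⟩).val = 0 ∧
      ((∀ x y, τ (χ (σ x) (σ y)) = ψ x y) ∨
       (∀ x y, τ (χ (σ y) (σ x)) = ψ x y))) := by
  have hn : m < n := by omega
  have hψ1 : ∀ x y (hx : m ≤ x.val) (hy : m ≤ y.val),
      mulψ x y = Fin.castLE hn.le (ψ ⟨x, hx⟩ ⟨y, hy⟩) := by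
    intro x y hx hy
    rw [hmulψ, dif_pos ⟨hx, hy⟩]
  have hψ0 : ∀ x y, ¬(m ≤ x.val ∧ m ≤ y.val) → mulψ x y = ⟨0, by omega⟩ := by
    intro x y h
    rw [hmulψ, dif_neg h]
  have hχ1 : ∀ x y (hx : m ≤ x.val) (hy : m ≤ y.val),
      mulχ x y = Fin.castLE hn.le (χ ⟨x, hx⟩ ⟨y, hy⟩) := by
    intro x y hx hy
    rw [hmulχ, dif_pos ⟨hx, hy⟩]
  have hχ0 : ∀ x y, ¬(m ≤ x.val ∧ m ≤ y.val) → mulχ x y = ⟨0, by omega⟩ := by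
    intro x y h
    rw [hmulχ, dif_neg h]
  constructor
  · rintro ⟨π, hπ | hπ⟩
    · obtain ⟨σ, τ, h1, h2⟩ := fwd16 n m hm2 hn ψ χ hψ mulψ mulχ hψ1 hψ0 hχ1 hχ0 π hπ
      exact ⟨σ, τ, h1, Or.inl h2⟩
    · obtain ⟨σ, τ, h1, h2⟩ := fwd16 n m hm2 hn ψ (fun a b => χ b a) hψ mulψ
        (fun a b => mulχ b a)
        hψ1 hψ0
        (fun x y hx hy => hχ1 y x hy hx)
        (fun x y h => hχ0 y x (fun h2 => h ⟨h2.2, h2.1⟩))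
        π hπ
      exact ⟨σ, τ, h1, Or.inr h2⟩
  · rintro ⟨σ, τ, hz, h | h⟩
    · obtain ⟨π, hπ⟩ := bwd16 n m hm2 hn ψ χ mulψ mulχ hψ1 hψ0 hχ1 hχ0 σ τ hz h
      exact ⟨π, Or.inl hπ⟩
    · obtain ⟨π, hπ⟩ := bwd16 n m hm2 hn ψ (fun a b => χ b a) mulψ (fun a b => mulχ b a)
        hψ1 hψ0
        (fun x y hx hy => hχ1 y x hy hx)
        (fun x y h => hχ0 y x (fun h2 => h ⟨h2.2, h2.1⟩))
        σ τ hz h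
      exact ⟨π, Or.inr hπ⟩
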